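/- Let 1 ≤ k ≤ n, let H ⊆ {1,…,n} with |H| ≤ k, let x ∈ ℝⁿ be supported in H, and let z ∈ ℝⁿ. Then ‖z_{Hᶜ}‖_Σ² + ‖x + z_H‖₂² ≤ ‖x + z‖_Σ². -/

import Mathlib

open scoped BigOperators ENNReal RealInnerProductSpace
open MeasureTheory Metric

noncomputable section

/-- The set of `k`-sparse vectors of `ℝⁿ`. -/
def sparseVecs (n k : ℕ) : Set (EuclideanSpace ℝ (Fin n)) :=
  {x | ∃ s : Finset (Fin n), s.card ≤ k ∧ ∀ i ∉ s, x i = 0}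

/-- Descent set (collection of descent vectors) of `R` at `x`. -/
def descentCone {n : ℕ} (R : EuclideanSpace ℝ (Fin n) → ℝ) (x : EuclideanSpace ℝ (Fin n)) :
    Set (EuclideanSpace ℝ (Fin n)) := {z | R (x + z) ≤ R x}

/-- Descent vectors of `R` at the model set `S`. -/
def descentConeSet {n : ℕ} (R : EuclideanSpace ℝ (Fin n) → ℝ)
    (S : Set (EuclideanSpace ℝ (Fin n))) : Set (EuclideanSpace ℝ (Fin n)) :=
  ⋃ x ∈ S, descentCone R x

/-- Weighted ℓ¹-norm `‖z‖_w = ∑ i, w i * |z i|`. -/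
def wNorm {n : ℕ} (w : Fin n → ℝ) (z : EuclideanSpace ℝ (Fin n)) : ℝ := ∑ i, w i * |z i|

/-- Restriction of a vector to a set of coordinates (`z_S`). -/
def coordRestrict {n : ℕ} (z : EuclideanSpace ℝ (Fin n)) (S : Finset (Fin n)) :
    EuclideanSpace ℝ (Fin n) := WithLp.toLp 2 (fun i => if i ∈ S then z i else 0)

open Pointwise

section AuxAtomSplit
variable {n k : ℕ}

def atomSet (n k : ℕ) : Set (EuclideanSpace ℝ (Fin n)) :=
  {u : EuclideanSpace ℝ (Fin n) | u ∈ sparseVecs n k ∧ ‖u‖ = 1}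

lemma coordRestrict_add (v w : EuclideanSpace ℝ (Fin n)) (S : Finset (Fin n)) :
    coordRestrict (v + w) S = coordRestrict v S + coordRestrict w S := by
  ext i; simp only [coordRestrict, PiLp.toLp_apply, PiLp.add_apply]; split <;> simp
lemma coordRestrict_smul (c : ℝ) (v : EuclideanSpace ℝ (Fin n)) (S : Finset (Fin n)) :
    coordRestrict (c • v) S = c • coordRestrict v S := by
  ext i; simp only [coordRestrict, PiLp.toLp_apply, PiLp.smul_apply]; split <;> simp
lemma coordRestrict_zero (S : Finset (Fin n)) :
    coordRestrict (0 : EuclideanSpace ℝ (Fin n)) S = 0 := by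
  ext i; simp [coordRestrict]

lemma coordRestrict_sum {ι : Type*} (t : Finset ι) (f : ι → EuclideanSpace ℝ (Fin n))
    (S : Finset (Fin n)) :
    coordRestrict (∑ j ∈ t, f j) S = ∑ j ∈ t, coordRestrict (f j) S := by
  classical
  induction t using Finset.induction with
  | empty => simp [coordRestrict_zero]
  | insert _ _ hj ih => rename_i a s
                        rw [Finset.sum_insert hj, Finset.sum_insert hj, coordRestrict_add, ih]

lemma eucl_sum_apply {ι : Type*} (t : Finset ι) (f : ι → EuclideanSpace ℝ (Fin n)) (j : Fin n) :
    (∑ i ∈ t, f i) j = ∑ i ∈ t, f i j := by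
  classical
  induction t using Finset.induction with
  | empty => simp
  | insert _ _ hj ih => rename_i a s
                        rw [Finset.sum_insert hj, Finset.sum_insert hj, PiLp.add_apply, ih]

lemma norm_sq_eq (w : EuclideanSpace ℝ (Fin n)) : ‖w‖ ^ 2 = ∑ i, ‖w i‖ ^ 2 := by
  rw [EuclideanSpace.norm_eq, Real.sq_sqrt]; positivity

lemma norm_coordRestrict_sq_add (v : EuclideanSpace ℝ (Fin n)) (S : Finset (Fin n)) :
    ‖coordRestrict v S‖ ^ 2 + ‖coordRestrict v Sᶜ‖ ^ 2 = ‖v‖ ^ 2 := by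
  rw [norm_sq_eq, norm_sq_eq, norm_sq_eq]
  have h1 : ∀ i, ‖coordRestrict v S i‖ ^ 2 = if i ∈ S then ‖v i‖ ^ 2 else 0 := by
    intro i; simp [coordRestrict]
  have h2 : ∀ i, ‖coordRestrict v Sᶜ i‖ ^ 2 = if i ∈ S then 0 else ‖v i‖ ^ 2 := by
    intro i; simp [coordRestrict]
  simp_rw [h1, h2, ← Finset.sum_add_distrib]
  congr 1; funext i; by_cases h : i ∈ S <;> simp [h]

lemma coordRestrict_sparse {v : EuclideanSpace ℝ (Fin n)} (hv : v ∈ sparseVecs n k)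
    (S : Finset (Fin n)) : coordRestrict v S ∈ sparseVecs n k := by
  obtain ⟨s, hs, h0⟩ := hv
  exact ⟨s, hs, fun i hi => by simp [coordRestrict, h0 i hi]⟩

lemma smul_sparse {v : EuclideanSpace ℝ (Fin n)} (hv : v ∈ sparseVecs n k) (c : ℝ) :
    c • v ∈ sparseVecs n k := by
  obtain ⟨s, hs, h0⟩ := hv
  exact ⟨s, hs, fun i hi => by simp [h0 i hi]⟩

lemma single_mem_atomSet (hk : 1 ≤ k) (i : Fin n) (c : ℝ) (hc : |c| = 1) :
    EuclideanSpace.single i c ∈ atomSet n k := by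
  refine ⟨⟨{i}, by simpa using hk, fun j hj => ?_⟩, by
    rw [EuclideanSpace.norm_single]; simpa using hc⟩
  rw [EuclideanSpace.single_apply]
  simp only [Finset.mem_singleton] at hj
  simp [hj]

lemma zero_mem_hull (hk : 1 ≤ k) (hkn : k ≤ n) :
    (0 : EuclideanSpace ℝ (Fin n)) ∈ convexHull ℝ (atomSet n k) := by
  have hn : 0 < n := lt_of_lt_of_le hk hkn
  set i0 : Fin n := ⟨0, hn⟩
  have h1 : EuclideanSpace.single i0 (1:ℝ) ∈ atomSet n k :=
    single_mem_atomSet hk i0 1 (by norm_num)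
  have h2 : EuclideanSpace.single i0 (-1:ℝ) ∈ atomSet n k :=
    single_mem_atomSet hk i0 (-1) (by norm_num)
  have : (0 : EuclideanSpace ℝ (Fin n)) ∈
      segment ℝ (EuclideanSpace.single i0 (1:ℝ)) (EuclideanSpace.single i0 (-1:ℝ)) := by
    refine ⟨1/2, 1/2, by norm_num, by norm_num, by norm_num, ?_⟩
    ext j
    simp only [segment, PiLp.add_apply, PiLp.smul_apply, EuclideanSpace.single_apply]
    by_cases h : j = i0 <;> simp [h] <;> norm_num
  exact segment_subset_convexHull h1 h2 this

/-- Every vector is in some positive dilate of the hull. -/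
lemma exists_mem_smul_hull (hk : 1 ≤ k) (hkn : k ≤ n) (v : EuclideanSpace ℝ (Fin n)) :
    ∃ t : ℝ, 0 < t ∧ v ∈ t • convexHull ℝ (atomSet n k) := by
  classical
  set T : ℝ := ∑ i, |v i| with hT
  by_cases hT0 : T = 0
  · have hv : v = 0 := by
      ext i
      have := (Finset.sum_eq_zero_iff_of_nonneg (fun i _ => abs_nonneg (v i))).mp hT0 i
        (Finset.mem_univ i)
      simpa [abs_eq_zero] using this
    refine ⟨1, one_pos, ?_⟩
    rw [hv, one_smul]
    exact zero_mem_hull hk hkn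
  · have hTpos : 0 < T := lt_of_le_of_ne (Finset.sum_nonneg fun i _ => abs_nonneg _) (Ne.symm hT0)
    refine ⟨T, hTpos, ?_⟩
    set u : Fin n → EuclideanSpace ℝ (Fin n) := fun i =>
      EuclideanSpace.single i (if v i = 0 then 1 else v i / |v i|) with hu
    have hmemA : ∀ i, u i ∈ atomSet n k := by
      intro i
      refine single_mem_atomSet hk i _ ?_
      by_cases h : v i = 0
      · simp [h]
      · rw [if_neg h, abs_div, abs_abs, div_self (abs_ne_zero.mpr h)]
    have hsum : ∑ i, |v i| • u i = v := by
      ext j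
      rw [eucl_sum_apply]
      simp only [PiLp.smul_apply, smul_eq_mul]
      rw [Finset.sum_eq_single j]
      · by_cases h : v j = 0 <;>
          simp [hu, EuclideanSpace.single_apply, h, mul_div_assoc]
        field_simp
      · intro i _ hij
        simp only [hu, EuclideanSpace.single_apply]
        rw [if_neg (by exact fun h => hij h.symm)]
        simp
      · intro h; exact absurd (Finset.mem_univ j) h
    have hcm : Finset.univ.centerMass (fun i => |v i|) u ∈ convexHull ℝ (atomSet n k) :=
      Finset.centerMass_mem_convexHull _ (fun i _ => abs_nonneg _) (by rwa [← hT])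
        (fun i _ => hmemA i)
    have hcmeq : Finset.univ.centerMass (fun i => |v i|) u = T⁻¹ • v := by
      rw [Finset.centerMass, ← hT, hsum]
    rw [hcmeq] at hcm
    rwa [Set.mem_smul_set_iff_inv_smul_mem₀ (ne_of_gt hTpos)]

lemma key_hull (S : Finset (Fin n)) {w : EuclideanSpace ℝ (Fin n)}
    (hw : w ∈ convexHull ℝ (atomSet n k)) :
    gauge (convexHull ℝ (atomSet n k)) (coordRestrict w Sᶜ) ^ 2
      + ‖coordRestrict w S‖ ^ 2 ≤ 1 := by
  classical
  rw [convexHull_eq] at hw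
  obtain ⟨ι, t, lam, uu, hl0, hl1, huu, hcm⟩ := hw
  have hw' : w = ∑ j ∈ t, lam j • uu j := by
    rw [← hcm, Finset.centerMass_eq_of_sum_1 _ _ hl1]
  set s : ι → ℝ := fun j => ‖coordRestrict (uu j) Sᶜ‖ with hs
  set c : ι → ℝ := fun j => ‖coordRestrict (uu j) S‖ with hc
  have hwS : coordRestrict w S = ∑ j ∈ t, lam j • coordRestrict (uu j) S := by
    rw [hw', coordRestrict_sum]
    exact Finset.sum_congr rfl fun j _ => coordRestrict_smul _ _ _
  have hwSc : coordRestrict w Sᶜ = ∑ j ∈ t, lam j • coordRestrict (uu j) Sᶜ := by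
    rw [hw', coordRestrict_sum]
    exact Finset.sum_congr rfl fun j _ => coordRestrict_smul _ _ _
  -- Step B
  have hB : ‖coordRestrict w S‖ ≤ ∑ j ∈ t, lam j * c j := by
    rw [hwS]
    refine le_trans (norm_sum_le _ _) (le_of_eq (Finset.sum_congr rfl fun j hj => ?_))
    rw [norm_smul, Real.norm_eq_abs, abs_of_nonneg (hl0 j hj)]
  -- Step C
  set A' : ℝ := ∑ j ∈ t, lam j * s j with hA'
  have hA'0 : 0 ≤ A' := Finset.sum_nonneg fun j hj => mul_nonneg (hl0 j hj) (norm_nonneg _)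
  have hC : gauge (convexHull ℝ (atomSet n k)) (coordRestrict w Sᶜ) ≤ A' := by
    by_cases hA : A' = 0
    · have hzero : coordRestrict w Sᶜ = 0 := by
        rw [hwSc]
        refine Finset.sum_eq_zero fun j hj => ?_
        have hterm : lam j * s j = 0 :=
          (Finset.sum_eq_zero_iff_of_nonneg
            (fun j hj => mul_nonneg (hl0 j hj) (norm_nonneg _))).mp hA j hj
        have : ‖lam j • coordRestrict (uu j) Sᶜ‖ = 0 := by
          rw [norm_smul, Real.norm_eq_abs, abs_of_nonneg (hl0 j hj)]
          exact hterm
        simpa [norm_eq_zero] using this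
      rw [hzero, gauge_zero, hA]
    · have hApos : 0 < A' := lt_of_le_of_ne hA'0 (Ne.symm hA)
      set t' := t.filter (fun j => s j ≠ 0) with ht'
      have hA'eq : ∑ j ∈ t', lam j * s j = A' := by
        rw [hA']
        refine Finset.sum_filter_of_ne fun j hj hne => ?_
        intro h0
        exact hne (by rw [h0, mul_zero])
      have hwSc' : coordRestrict w Sᶜ = ∑ j ∈ t', lam j • coordRestrict (uu j) Sᶜ := by
        rw [hwSc]
        refine (Finset.sum_filter_of_ne fun j hj hne => ?_).symm
        intro h0
        apply hne
        have : coordRestrict (uu j) Sᶜ = 0 := by rwa [← norm_eq_zero]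
        rw [this, smul_zero]
      set p : ι → EuclideanSpace ℝ (Fin n) := fun j => (s j)⁻¹ • coordRestrict (uu j) Sᶜ with hp
      have hpA : ∀ j ∈ t', p j ∈ atomSet n k := by
        intro j hj
        obtain ⟨hjt, hsj⟩ := Finset.mem_filter.mp hj
        refine ⟨smul_sparse (coordRestrict_sparse (huu j hjt).1 Sᶜ) _, ?_⟩
        rw [norm_smul, Real.norm_eq_abs, abs_inv, abs_of_nonneg (norm_nonneg _)]
        exact inv_mul_cancel₀ hsj
      have hcm2 : t'.centerMass (fun j => lam j * s j) p ∈ convexHull ℝ (atomSet n k) :=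
        Finset.centerMass_mem_convexHull _
          (fun j hj => mul_nonneg (hl0 j (Finset.mem_filter.mp hj).1) (norm_nonneg _))
          (by rw [hA'eq]; exact hApos) hpA
      have hcm2eq : t'.centerMass (fun j => lam j * s j) p = A'⁻¹ • coordRestrict w Sᶜ := by
        rw [Finset.centerMass, hA'eq, hwSc']
        congr 1
        refine Finset.sum_congr rfl fun j hj => ?_
        obtain ⟨hjt, hsj⟩ := Finset.mem_filter.mp hj
        rw [hp, smul_smul, mul_assoc, mul_inv_cancel₀ hsj, mul_one]
      rw [hcm2eq] at hcm2
      exact gauge_le_of_mem hA'0 ((Set.mem_smul_set_iff_inv_smul_mem₀ hA _ _).mpr hcm2)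
  -- Step D
  have hsc1 : ∀ j ∈ t, c j ^ 2 + s j ^ 2 = 1 := fun j hj => by
    have h := norm_coordRestrict_sq_add (uu j) S
    rw [(huu j hj).2] at h
    simpa using h
  -- Step E
  have hA2 : A' ^ 2 ≤ ∑ j ∈ t, lam j * s j ^ 2 := by
    have h := Finset.sum_sq_le_sum_mul_sum_of_sq_eq_mul t (r := fun j => lam j * s j)
      (f := lam) (g := fun j => lam j * s j ^ 2) hl0
      (fun j hj => mul_nonneg (hl0 j hj) (sq_nonneg _)) (fun j _ => by ring)
    rwa [hl1, one_mul] at h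
  have hB2 : (∑ j ∈ t, lam j * c j) ^ 2 ≤ ∑ j ∈ t, lam j * c j ^ 2 := by
    have h := Finset.sum_sq_le_sum_mul_sum_of_sq_eq_mul t (r := fun j => lam j * c j)
      (f := lam) (g := fun j => lam j * c j ^ 2) hl0
      (fun j hj => mul_nonneg (hl0 j hj) (sq_nonneg _)) (fun j _ => by ring)
    rwa [hl1, one_mul] at h
  calc gauge (convexHull ℝ (atomSet n k)) (coordRestrict w Sᶜ) ^ 2 + ‖coordRestrict w S‖ ^ 2
      ≤ A' ^ 2 + (∑ j ∈ t, lam j * c j) ^ 2 :=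
        add_le_add (pow_le_pow_left₀ (gauge_nonneg _) hC 2)
          (pow_le_pow_left₀ (norm_nonneg _) hB 2)
    _ ≤ (∑ j ∈ t, lam j * s j ^ 2) + ∑ j ∈ t, lam j * c j ^ 2 := add_le_add hA2 hB2
    _ = ∑ j ∈ t, lam j * (c j ^ 2 + s j ^ 2) := by
        rw [← Finset.sum_add_distrib]
        exact Finset.sum_congr rfl fun j _ => by ring
    _ = ∑ j ∈ t, lam j := Finset.sum_congr rfl fun j hj => by rw [hsc1 j hj, mul_one]
    _ = 1 := hl1

lemma gauge_restrict_sq (hk : 1 ≤ k) (hkn : k ≤ n) (S : Finset (Fin n))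
    (v : EuclideanSpace ℝ (Fin n)) :
    gauge (convexHull ℝ (atomSet n k)) (coordRestrict v Sᶜ) ^ 2 + ‖coordRestrict v S‖ ^ 2
      ≤ gauge (convexHull ℝ (atomSet n k)) v ^ 2 := by
  set C := convexHull ℝ (atomSet n k) with hC
  set L := gauge C (coordRestrict v Sᶜ) ^ 2 + ‖coordRestrict v S‖ ^ 2 with hL
  have hL0 : 0 ≤ L := add_nonneg (pow_nonneg (gauge_nonneg _) 2) (sq_nonneg _)
  have hub : Real.sqrt L ≤ gauge C v := by
    rw [gauge_def]
    refine le_csInf ?_ ?_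
    · obtain ⟨t, ht, hm⟩ := exists_mem_smul_hull hk hkn v
      exact ⟨t, Set.mem_Ioi.mpr ht, hm⟩
    · rintro r ⟨hr, hvr⟩
      rw [Set.mem_Ioi] at hr
      obtain ⟨w, hwC, hvw⟩ := hvr
      have h1 : coordRestrict v Sᶜ = r • coordRestrict w Sᶜ := by
        rw [← hvw, coordRestrict_smul]
      have h2 : coordRestrict v S = r • coordRestrict w S := by
        rw [← hvw, coordRestrict_smul]
      have hLr : L ≤ r ^ 2 := by
        rw [hL, h1, h2, gauge_smul_of_nonneg hr.le, norm_smul, Real.norm_eq_abs,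
          abs_of_pos hr, smul_eq_mul]
        have hkey := key_hull S hwC
        rw [← hC] at hkey
        nlinarith [sq_nonneg r]
      calc Real.sqrt L ≤ Real.sqrt (r ^ 2) := Real.sqrt_le_sqrt hLr
        _ = r := by rw [Real.sqrt_sq hr.le]
  calc L = Real.sqrt L ^ 2 := (Real.sq_sqrt hL0).symm
    _ ≤ gauge C v ^ 2 := pow_le_pow_left₀ (Real.sqrt_nonneg _) hub 2

end AuxAtomSplit

/-- Atomic norm `‖·‖_Σ` generated by the `k`-sparse unit vectors. -/
def atomNormSigma (n k : ℕ) (z : EuclideanSpace ℝ (Fin n)) : ℝ :=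
  gauge (convexHull ℝ {u : EuclideanSpace ℝ (Fin n) | u ∈ sparseVecs n k ∧ ‖u‖ = 1}) z

/-- key inequality from the proof of Proposition 1 of the paper:
`‖z_{Hᶜ}‖_Σ² + ‖x + z_H‖₂² ≤ ‖x + z‖_Σ²` for `x` supported in `H`, `|H| ≤ k`. -/
theorem atomNorm_split_inequality
    (n k : ℕ) (hk : 1 ≤ k) (hkn : k ≤ n)
    (H : Finset (Fin n)) (hH : H.card ≤ k)
    (x z : EuclideanSpace ℝ (Fin n)) (hx : ∀ i ∉ H, x i = 0) :
    (atomNormSigma n k (coordRestrict z Hᶜ)) ^ 2 + ‖x + coordRestrict z H‖ ^ 2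
      ≤ (atomNormSigma n k (x + z)) ^ 2 := by
  have e1 : x + coordRestrict z H = coordRestrict (x + z) H := by
    ext i
    by_cases h : i ∈ H <;>
      simp [coordRestrict, PiLp.add_apply, h]
    exact hx i h
  have e2 : coordRestrict z Hᶜ = coordRestrict (x + z) Hᶜ := by
    ext i
    by_cases h : i ∈ H <;>
      simp [coordRestrict, PiLp.add_apply, Finset.mem_compl, h]
    exact hx i h
  rw [e1, e2]
  exact gauge_restrict_sq hk hkn H (x + z)


end
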